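/- Let 𝕂 be an algebraically closed field whose characteristic is 0 or coprime with k, and let A ∈ SL₂(𝕂). Then Φ_k(tr(A)) = 0 if and only if A^k = Id and A ≠ ±Id. -/

import Mathlib

open Polynomial

lemma exists_G (𝕂 : Type*) [Field 𝕂] (Φ : Polynomial ℤ) :
    ∃ G : Polynomial 𝕂, ∀ l : 𝕂, l ≠ 0 →
      G.eval l = l ^ Φ.natDegree * (Polynomial.aeval (l + l⁻¹)) Φ := by
  set d := Φ.natDegree with hd
  refine ⟨∑ i ∈ Finset.range (d+1),
      Polynomial.C ((Φ.coeff i : ℤ) : 𝕂) * X ^ (d - i) * (X^2+1) ^ i, ?_⟩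
  intro l hl
  have hmap : (Polynomial.aeval (l + l⁻¹)) Φ
      = ∑ i ∈ Finset.range (d+1), ((Φ.coeff i : ℤ):𝕂) * (l+l⁻¹)^i := by
    rw [Polynomial.aeval_def, Polynomial.eval₂_eq_eval_map,
      Polynomial.eval_eq_sum_range' (n := d+1) (Nat.lt_succ_of_le (le_trans Polynomial.natDegree_map_le le_rfl))]
    simp [Polynomial.coeff_map]
  rw [hmap, Polynomial.eval_finset_sum, Finset.mul_sum]
  refine Finset.sum_congr rfl fun i hi => ?_
  have hile : i ≤ d := Nat.lt_succ_iff.mp (Finset.mem_range.mp hi)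
  have h1 : l ^ i * (l + l⁻¹) ^ i = (l^2 + 1) ^ i := by
    rw [← mul_pow]; congr 1; field_simp
  have h2 : l ^ d = l ^ (d - i) * l ^ i := by rw [← pow_add, Nat.sub_add_cancel hile]
  simp only [Polynomial.eval_mul, Polynomial.eval_pow, Polynomial.eval_add, Polynomial.eval_one,
    Polynomial.eval_C, Polynomial.eval_X]
  rw [h2, ← h1]; ring

lemma X_sub_one_ne_zero (𝕂 : Type*) [Field 𝕂] : (X - 1 : Polynomial 𝕂) ≠ 0 := by
  intro h
  have := congrArg (Polynomial.eval 0) h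
  simp at this

lemma X_sq_sub_one_ne_zero (𝕂 : Type*) [Field 𝕂] : (X^2 - 1 : Polynomial 𝕂) ≠ 0 := by
  intro h
  have := congrArg (Polynomial.eval 0) h
  simp at this

lemma odd_val {𝕂 : Type*} [Field 𝕂] [Infinite 𝕂] (k m : ℕ) (hk : k = 2*m+1) (Φ : Polynomial ℤ)
    (h : ∀ l : 𝕂, l ≠ 0 →
      (Polynomial.aeval (l + l⁻¹)) Φ * (l - 1) = (l ^ k - 1) * l ^ ((1 - (k : ℤ)) / 2)) :
    (Polynomial.aeval (2:𝕂)) Φ = k := by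
  obtain ⟨G, hG⟩ := exists_G 𝕂 Φ
  set d := Φ.natDegree with hd
  have hexp : (1 - (k : ℤ)) / 2 = -(m:ℤ) := by subst hk; push_cast; omega
  have hinf : ({0}ᶜ : Set 𝕂).Infinite := Set.Finite.infinite_compl (Set.finite_singleton 0)
  have key : G * X ^ m * (X - 1) = (∑ i ∈ Finset.range k, X ^ i) * X ^ d * (X - 1) := by
    apply Polynomial.eq_of_infinite_eval_eq
    refine hinf.mono fun l hl => ?_
    have hl0 : l ≠ 0 := hl
    have hh := h l hl0
    rw [hexp, zpow_neg, zpow_natCast] at hh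
    have hgs : (∑ i ∈ Finset.range k, l ^ i) * (l - 1) = l ^ k - 1 := geom_sum_mul l k
    have hlm : (l:𝕂)^m ≠ 0 := pow_ne_zero _ hl0
    simp only [Set.mem_setOf_eq, Polynomial.eval_mul, Polynomial.eval_pow,
      Polynomial.eval_sub, Polynomial.eval_one, Polynomial.eval_X, Polynomial.eval_geom_sum]
    calc eval l G * l ^ m * (l - 1)
        = (Polynomial.aeval (l + l⁻¹)) Φ * (l - 1) * (l ^ d * l ^ m) := by rw [hG l hl0]; ring
      _ = (l ^ k - 1) * (l^m)⁻¹ * (l ^ d * l ^ m) := by rw [hh]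
      _ = (l ^ k - 1) * l ^ d * ((l^m)⁻¹ * l^m) := by ring
      _ = (l ^ k - 1) * l ^ d := by rw [inv_mul_cancel₀ hlm, mul_one]
      _ = (∑ i ∈ Finset.range k, l ^ i) * (l-1) * l ^ d := by rw [hgs]
      _ = (∑ i ∈ Finset.range k, l ^ i) * l ^ d * (l - 1) := by ring
  have key2 : G * X ^ m = (∑ i ∈ Finset.range k, X ^ i) * X ^ d :=
    mul_right_cancel₀ (X_sub_one_ne_zero 𝕂) key
  have h1 := congrArg (Polynomial.eval 1) key2
  simp only [Polynomial.eval_mul, Polynomial.eval_pow, Polynomial.eval_X, one_pow, mul_one,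
    Polynomial.eval_geom_sum] at h1
  rw [hG 1 one_ne_zero] at h1
  have h2 : (2:𝕂) = 1 + (1:𝕂)⁻¹ := by norm_num
  rw [h2]
  simpa using h1

lemma even_val {𝕂 : Type*} [Field 𝕂] [Infinite 𝕂] (k m : ℕ) (hm : 1 ≤ m) (hk : k = 2*m)
    (Φ : Polynomial ℤ)
    (h : ∀ l : 𝕂, l ≠ 0 →
      (Polynomial.aeval (l + l⁻¹)) Φ * (l ^ 2 - 1) = (l ^ k - 1) * l ^ (1 - (k : ℤ) / 2)) :
    (Polynomial.aeval (2:𝕂)) Φ = m ∧ (Polynomial.aeval (-2:𝕂)) Φ * (-1:𝕂) ^ (m-1) = m := by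
  obtain ⟨G, hG⟩ := exists_G 𝕂 Φ
  set d := Φ.natDegree with hd
  have hexp : 1 - (k : ℤ) / 2 = 1 - (m:ℤ) := by subst hk; push_cast; omega
  have hinf : ({0}ᶜ : Set 𝕂).Infinite := Set.Finite.infinite_compl (Set.finite_singleton 0)
  have hevT : ∀ x : 𝕂, Polynomial.eval x (∑ i ∈ Finset.range m, ((X:Polynomial 𝕂)^2)^i)
      = ∑ i ∈ Finset.range m, (x^2)^i := by
    intro x; rw [Polynomial.eval_finset_sum]; simp
  have key : G * X ^ (m-1) * (X^2 - 1)
      = (∑ i ∈ Finset.range m, (X^2) ^ i) * X ^ d * (X^2 - 1) := by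
    apply Polynomial.eq_of_infinite_eval_eq
    refine hinf.mono fun l hl => ?_
    have hl0 : l ≠ 0 := hl
    have hh := h l hl0
    rw [hexp] at hh
    have hzz : l ^ ((1:ℤ) - (m:ℤ)) * l ^ (m-1 : ℕ) = 1 := by
      rw [show (l:𝕂) ^ (m-1:ℕ) = l ^ ((m-1:ℕ):ℤ) from (zpow_natCast l (m-1)).symm,
        ← zpow_add₀ hl0]
      rw [show (1:ℤ) - (m:ℤ) + ((m-1:ℕ):ℤ) = 0 by push_cast [Nat.cast_sub hm]; ring]
      exact zpow_zero l
    have hgs : (∑ i ∈ Finset.range m, (l^2) ^ i) * (l^2 - 1) = l ^ k - 1 := by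
      rw [geom_sum_mul (l^2) m, hk, pow_mul]
    simp only [Set.mem_setOf_eq, Polynomial.eval_mul, Polynomial.eval_pow,
      Polynomial.eval_sub, Polynomial.eval_one, Polynomial.eval_X, hevT]
    calc eval l G * l ^ (m-1) * (l^2 - 1)
        = (Polynomial.aeval (l + l⁻¹)) Φ * (l^2 - 1) * l ^ d * l ^ (m-1) := by
          rw [hG l hl0]; ring
      _ = (l ^ k - 1) * l ^ ((1:ℤ) - (m:ℤ)) * l ^ d * l ^ (m-1 : ℕ) := by rw [hh]
      _ = (l ^ k - 1) * l ^ d * (l ^ ((1:ℤ) - (m:ℤ)) * l ^ (m-1 : ℕ)) := by ring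
      _ = (l ^ k - 1) * l ^ d := by rw [hzz, mul_one]
      _ = (∑ i ∈ Finset.range m, (l^2) ^ i) * (l^2-1) * l ^ d := by rw [hgs]
      _ = (∑ i ∈ Finset.range m, (l^2) ^ i) * l ^ d * (l^2 - 1) := by ring
  have key2 : G * X ^ (m-1) = (∑ i ∈ Finset.range m, (X^2) ^ i) * X ^ d :=
    mul_right_cancel₀ (X_sq_sub_one_ne_zero 𝕂) key
  constructor
  · have h1 := congrArg (Polynomial.eval 1) key2
    simp only [Polynomial.eval_mul, Polynomial.eval_pow, Polynomial.eval_X, one_pow, mul_one,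
      hevT] at h1
    rw [hG 1 one_ne_zero] at h1
    rw [show (2:𝕂) = 1 + (1:𝕂)⁻¹ by norm_num]
    simpa using h1
  · have h1 := congrArg (Polynomial.eval (-1)) key2
    have hne : (-1:𝕂) ≠ 0 := by norm_num
    simp only [Polynomial.eval_mul, Polynomial.eval_pow, Polynomial.eval_X, hevT] at h1
    rw [hG (-1) hne] at h1
    have hinv : (-1:𝕂) + (-1:𝕂)⁻¹ = -2 := by norm_num
    rw [hinv] at h1
    have h2 : ∑ i ∈ Finset.range m, (((-1:𝕂))^2)^i = (m:𝕂) := by norm_num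
    rw [h2] at h1
    -- h1 : (-1)^d * aeval (-2) Φ * (-1)^(m-1) = m * (-1)^d
    have hunit : ((-1:𝕂)^d) ≠ 0 := by
      apply pow_ne_zero; norm_num
    apply mul_left_cancel₀ hunit
    calc (-1:𝕂)^d * ((Polynomial.aeval (-2:𝕂)) Φ * (-1:𝕂)^(m-1))
        = (-1:𝕂)^d * (Polynomial.aeval (-2:𝕂)) Φ * (-1:𝕂)^(m-1) := by ring
      _ = (m:𝕂) * (-1:𝕂)^d := by rw [h1]
      _ = (-1:𝕂)^d * m := by ring

lemma binom {𝕂 : Type*} [Field 𝕂] (N : Matrix (Fin 2) (Fin 2) 𝕂) (hN : N * N = 0) (c : 𝕂) :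
    ∀ n : ℕ, (c • (1:Matrix (Fin 2) (Fin 2) 𝕂) + N) ^ n
      = c ^ n • (1:Matrix (Fin 2) (Fin 2) 𝕂) + ((n:𝕂) * c ^ (n-1)) • N := by
  intro n
  induction n with
  | zero => simp
  | succ n ih =>
    rw [pow_succ, ih]
    have expand : (c ^ n • (1:Matrix (Fin 2) (Fin 2) 𝕂) + ((n:𝕂) * c ^ (n-1)) • N)
        * (c • 1 + N)
        = (c^n * c) • (1:Matrix (Fin 2) (Fin 2) 𝕂)
          + (c^n + (n:𝕂) * c ^ (n-1) * c) • N := by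
      simp only [mul_add, add_mul, smul_mul_assoc, mul_smul_comm, one_mul, mul_one, hN,
        smul_zero, smul_smul, add_zero]
      module
    rw [expand]
    congr 1
    · rw [← pow_succ]
    · congr 1
      cases n with
      | zero => norm_num
      | succ n =>
        simp only [Nat.succ_sub_one, Nat.add_sub_cancel]
        push_cast
        ring

/-- Let `𝕂` be algebraically closed of characteristic `0` or coprime with `k`, and
`A ∈ SL₂(𝕂)`. Then `Φₖ(tr A) = 0` iff `A^k = Id` and `A ≠ ±Id`, where `Φₖ ∈ ℤ[x]` is
determined by the defining identity interpreted over `𝕂`. -/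
theorem stmt4 (k : ℕ) (hk : 1 ≤ k) (𝕂 : Type*) [Field 𝕂] [IsAlgClosed 𝕂]
    (hchar : ringChar 𝕂 = 0 ∨ Nat.Coprime (ringChar 𝕂) k)
    (Φ : Polynomial ℤ)
    (hΦodd : Odd k → ∀ l : 𝕂, l ≠ 0 →
      (Polynomial.aeval (l + l⁻¹)) Φ * (l - 1) = (l ^ k - 1) * l ^ ((1 - (k : ℤ)) / 2))
    (hΦeven : Even k → ∀ l : 𝕂, l ≠ 0 →
      (Polynomial.aeval (l + l⁻¹)) Φ * (l ^ 2 - 1) = (l ^ k - 1) * l ^ (1 - (k : ℤ) / 2))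
    (A : Matrix.SpecialLinearGroup (Fin 2) 𝕂) :
    Polynomial.aeval (Matrix.trace (A : Matrix (Fin 2) (Fin 2) 𝕂)) Φ = 0 ↔
      (A ^ k = 1 ∧ (A : Matrix (Fin 2) (Fin 2) 𝕂) ≠ 1 ∧
        (A : Matrix (Fin 2) (Fin 2) 𝕂) ≠ -1) := by
  -- characteristic facts
  have hk2 : (k:𝕂) ≠ 0 := by
    intro h0
    have hdvd : ringChar 𝕂 ∣ k := by
      haveI := ringChar.charP 𝕂
      rwa [CharP.cast_eq_zero_iff 𝕂 (ringChar 𝕂) k] at h0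
    rcases hchar with h | h
    · rw [h] at hdvd
      omega
    · have h1 : ringChar 𝕂 ∣ Nat.gcd (ringChar 𝕂) k := Nat.dvd_gcd dvd_rfl hdvd
      rw [Nat.Coprime] at h
      rw [h] at h1
      exact CharP.ringChar_ne_one (Nat.dvd_one.mp h1)
  -- setup
  set M := (A : Matrix (Fin 2) (Fin 2) 𝕂) with hMdef
  have hdet : M.det = 1 := A.2
  set t := M.trace with htdef
  -- Cayley-Hamilton for 2x2
  have hCH : M * M - t • M + (1 : Matrix (Fin 2) (Fin 2) 𝕂) = 0 := by
    have h0 : M * M - M.trace • M + M.det • 1 = 0 := by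
      ext i j
      fin_cases i <;> fin_cases j <;>
        simp [Matrix.mul_apply, Fin.sum_univ_succ, Matrix.trace, Matrix.diag,
          Matrix.det_fin_two, Matrix.one_apply] <;> ring
    rw [hdet, one_smul] at h0
    exact h0
  -- eigenvalue
  obtain ⟨l, hlr⟩ := IsAlgClosed.exists_root (X^2 - C t * X + C 1 : Polynomial 𝕂) (by
    rw [show (X^2 - C t * X + C 1 : Polynomial 𝕂) = C 1 * X^2 + C (-t) * X + C 1 by
      simp [map_neg]; ring, Polynomial.degree_quadratic one_ne_zero]
    norm_num)
  have hql : l^2 - t*l + 1 = 0 := by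
    simpa using hlr
  have hl0 : l ≠ 0 := by
    intro h; rw [h] at hql; simp at hql
  have hsum : l + l⁻¹ = t := by
    have hmul : l * (t - l) = 1 := by linear_combination -hql
    rw [inv_eq_of_mul_eq_one_right hmul]
    ring
  have hprod : l * l⁻¹ = 1 := mul_inv_cancel₀ hl0
  have haev : (M - l • 1) * (M - l⁻¹ • 1) = 0 := by
    have h1 : (M - l • 1) * (M - l⁻¹ • 1)
        = M * M - l • M - l⁻¹ • M + (1 : Matrix (Fin 2) (Fin 2) 𝕂) := by
      simp only [sub_mul, mul_sub, smul_mul_assoc, mul_smul_comm, one_mul, mul_one, smul_smul,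
        smul_sub, inv_mul_cancel₀ hl0, one_smul]
      abel
    have h2 : M * M - l • M - l⁻¹ • M + (1 : Matrix (Fin 2) (Fin 2) 𝕂)
        = M * M - t • M + 1 := by
      rw [← hsum, add_smul]; abel
    rw [h1, h2, hCH]
  -- parity facts
  have F1 : (Polynomial.aeval (2:𝕂)) Φ ≠ 0 := by
    rcases Nat.even_or_odd k with he | ho
    · obtain ⟨m, hm⟩ := he
      have hm' : k = 2*m := by omega
      have hm1 : 1 ≤ m := by omega
      have := (even_val k m hm1 hm' Φ (hΦeven ⟨m, hm⟩)).1
      rw [this]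
      intro h0
      apply hk2
      rw [hm']
      push_cast
      rw [h0]; ring
    · obtain ⟨m, hm⟩ := ho
      have := odd_val k m (by omega) Φ (hΦodd ⟨m, hm⟩)
      rw [this]; exact hk2
  have F2 : (Polynomial.aeval (-2:𝕂)) Φ ≠ 0 := by
    rcases Nat.even_or_odd k with he | ho
    · obtain ⟨m, hm⟩ := he
      have hm' : k = 2*m := by omega
      have hm1 : 1 ≤ m := by omega
      have hv := (even_val k m hm1 hm' Φ (hΦeven ⟨m, hm⟩)).2
      intro h0
      rw [h0, zero_mul] at hv
      apply hk2
      rw [hm']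
      push_cast
      rw [← hv]; ring
    · by_cases h2 : (2:𝕂) = 0
      · rw [show (-2:𝕂) = 2 by rw [h2]; ring]
        exact F1
      · have hh := hΦodd ho (-1) (by norm_num)
        have hinv : (-1:𝕂) + (-1:𝕂)⁻¹ = -2 := by norm_num
        rw [hinv, ho.neg_one_pow] at hh
        intro h0
        rw [h0, zero_mul] at hh
        have hz : ((-1:𝕂)) ^ ((1 - (k : ℤ)) / 2) ≠ 0 := by
          apply zpow_ne_zero; norm_num
        rcases mul_eq_zero.mp hh.symm with h | h
        · apply h2; linear_combination -h
        · exact hz h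
  have F3 : (Polynomial.aeval t) Φ = 0 → l ^ k = 1 := by
    intro hPhi
    rcases Nat.even_or_odd k with he | ho
    · have hh := hΦeven he l hl0
      rw [hsum, hPhi, zero_mul] at hh
      have hz : l ^ (1 - (k : ℤ) / 2) ≠ 0 := zpow_ne_zero _ hl0
      rcases mul_eq_zero.mp hh.symm with h | h
      · linear_combination h
      · exact absurd h hz
    · have hh := hΦodd ho l hl0
      rw [hsum, hPhi, zero_mul] at hh
      have hz : l ^ ((1 - (k : ℤ)) / 2) ≠ 0 := zpow_ne_zero _ hl0
      rcases mul_eq_zero.mp hh.symm with h | h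
      · linear_combination h
      · exact absurd h hz
  have F4 : l ^ k = 1 → l ≠ 1 → l ≠ -1 → (Polynomial.aeval t) Φ = 0 := by
    intro hlk hl1 hlm1
    rcases Nat.even_or_odd k with he | ho
    · have hh := hΦeven he l hl0
      rw [hsum, hlk, sub_self, zero_mul] at hh
      have hz : l^2 - 1 ≠ 0 := by
        intro h
        rcases mul_self_eq_one_iff.mp (show l * l = 1 by linear_combination h) with h' | h'
        · exact hl1 h'
        · exact hlm1 h'
      exact (mul_eq_zero.mp hh).resolve_right hz
    · have hh := hΦodd ho l hl0
      rw [hsum, hlk, sub_self, zero_mul] at hh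
      have hz : l - 1 ≠ 0 := sub_ne_zero.mpr hl1
      exact (mul_eq_zero.mp hh).resolve_right hz
  constructor
  · intro hPhi
    have hlk : l ^ k = 1 := F3 hPhi
    have hl1 : l ≠ 1 := by
      intro h
      apply F1
      rw [← hPhi]
      congr 1
      rw [← hsum, h]
      norm_num
    have hlm1 : l ≠ -1 := by
      intro h
      apply F2
      rw [← hPhi]
      congr 1
      rw [← hsum, h]
      norm_num
    have hll : l ≠ l⁻¹ := by
      intro h
      have hh : l * l = 1 := by rw [← hprod, ← h]
      rcases mul_self_eq_one_iff.mp hh with h' | h'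
      · exact hl1 h'
      · exact hlm1 h'
    have hco : IsCoprime (X - C l) (X - C l⁻¹ : Polynomial 𝕂) :=
      isCoprime_X_sub_C_of_isUnit_sub (isUnit_iff_ne_zero.2 (sub_ne_zero.2 hll))
    have hd1 : (X - C l) ∣ (X^k - 1 : Polynomial 𝕂) := by
      rw [Polynomial.dvd_iff_isRoot]
      simp [Polynomial.IsRoot, hlk]
    have hd2 : (X - C l⁻¹) ∣ (X^k - 1 : Polynomial 𝕂) := by
      rw [Polynomial.dvd_iff_isRoot]
      simp [Polynomial.IsRoot, inv_pow, hlk]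
    obtain ⟨q, hq⟩ := (hco.mul_dvd hd1 hd2)
    have hMk1 : M ^ k = 1 := by
      have h5 := congrArg (Polynomial.aeval M) hq
      simp only [map_sub, map_mul, map_pow, map_one, Polynomial.aeval_X,
        Polynomial.aeval_C, Algebra.algebraMap_eq_smul_one] at h5
      rw [haev, zero_mul] at h5
      rw [← sub_eq_zero]
      exact h5
    refine ⟨?_, ?_, ?_⟩
    · exact Subtype.ext (by rw [Matrix.SpecialLinearGroup.coe_pow]; exact hMk1)
    · intro h
      have ht1 : t = 2 := by
        rw [htdef, h, Matrix.trace_one]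
        simp
      apply hl1
      have h6 := hql
      rw [ht1] at h6
      have h7 : (l - 1)^2 = 0 := by linear_combination h6
      have h8 := pow_eq_zero_iff (n := 2) (two_ne_zero) |>.mp h7
      rw [sub_eq_zero] at h8
      exact h8
    · intro h
      have ht1 : t = -2 := by
        rw [htdef, h, Matrix.trace_neg, Matrix.trace_one]
        simp
      apply hlm1
      have h6 := hql
      rw [ht1] at h6
      have h7 : (l + 1)^2 = 0 := by linear_combination h6
      have h8 := pow_eq_zero_iff (n := 2) (two_ne_zero) |>.mp h7
      have : l = -1 := by linear_combination h8
      exact this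
  · rintro ⟨hAk, hM1, hMm1⟩
    have hMk : M ^ k = 1 := by
      have h5 := congrArg
        (fun B : Matrix.SpecialLinearGroup (Fin 2) 𝕂 => (B : Matrix (Fin 2) (Fin 2) 𝕂)) hAk
      simpa [Matrix.SpecialLinearGroup.coe_pow] using h5
    have hsq : l * l ≠ 1 := by
      intro hsq1
      have hinv : l⁻¹ = l := inv_eq_of_mul_eq_one_right hsq1
      set N := M - l • 1 with hN
      have hN2 : N * N = 0 := by
        have := haev
        rw [hinv] at this
        exact this
      have hMN : M = l • 1 + N := by rw [hN]; abel
      have hbin := binom N hN2 l k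
      rw [← hMN, hMk] at hbin
      have hc : (k:𝕂) * l^(k-1) ≠ 0 := mul_ne_zero hk2 (pow_ne_zero _ hl0)
      have hcN : ((k:𝕂) * l^(k-1)) • N = (1:Matrix (Fin 2) (Fin 2) 𝕂) - l^k • 1 :=
        eq_sub_of_add_eq' hbin.symm
      have hNval : N = (((k:𝕂) * l^(k-1))⁻¹ * (1 - l^k)) •
          (1:Matrix (Fin 2) (Fin 2) 𝕂) := by
        rw [mul_smul, sub_smul, one_smul, ← hcN, smul_smul, inv_mul_cancel₀ hc, one_smul]
      set s := ((k:𝕂) * l^(k-1))⁻¹ * (1 - l^k) with hs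
      have hss : (s * s) • (1:Matrix (Fin 2) (Fin 2) 𝕂) = 0 := by
        calc (s*s) • (1:Matrix (Fin 2) (Fin 2) 𝕂)
            = (s • (1:Matrix (Fin 2) (Fin 2) 𝕂)) * (s • 1) := by
              rw [smul_mul_assoc, mul_smul_comm, smul_smul, one_mul]
          _ = N * N := by rw [← hNval]
          _ = 0 := hN2
      have hs0 : s = 0 := by
        have h1 : s * s = 0 := by
          have h2 := congrArg (fun B : Matrix (Fin 2) (Fin 2) 𝕂 => B 0 0) hss
          simpa [Matrix.one_apply] using h2
        exact mul_self_eq_zero.mp h1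
      rw [hs0, zero_smul] at hNval
      have hMl : M = l • 1 := by rw [hMN, hNval, add_zero]
      rcases mul_self_eq_one_iff.mp hsq1 with h' | h'
      · exact hM1 (by rw [hMl, h', one_smul])
      · exact hMm1 (by rw [hMl, h', neg_smul, one_smul])
    have hl1 : l ≠ 1 := fun h => hsq (by rw [h]; ring)
    have hlm1 : l ≠ -1 := fun h => hsq (by rw [h]; ring)
    have hB : M - l⁻¹ • 1 ≠ 0 := by
      intro h
      have hMeq : M = l⁻¹ • 1 := by rwa [sub_eq_zero] at h
      have hd2 : M.det = (l⁻¹)^2 := by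
        rw [hMeq, Matrix.det_smul, Matrix.det_one]
        simp
      rw [hdet] at hd2
      have hll : l * l = 1 := by
        have := congrArg (· * l^2) hd2
        simp only [inv_pow, one_mul] at this
        rw [inv_mul_cancel₀ (pow_ne_zero 2 hl0)] at this
        linear_combination this
      rcases mul_self_eq_one_iff.mp hll with h' | h'
      · exact hl1 h'
      · exact hlm1 h'
    obtain ⟨i, j, hij⟩ : ∃ i j, (M - l⁻¹ • 1) i j ≠ 0 := by
      by_contra hcon
      push_neg at hcon
      exact hB (by ext i' j'; simpa using hcon i' j')
    set w : Fin 2 → 𝕂 := fun i' => (M - l⁻¹ • 1) i' j with hw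
    have hev : M.mulVec w = l • w := by
      have hcol : (M - l • 1).mulVec w = 0 := by
        ext i'
        have h3 : ((M - l • 1) * (M - l⁻¹ • 1)) i' j = 0 := by rw [haev]; simp
        rw [Matrix.mul_apply] at h3
        simpa [Matrix.mulVec, dotProduct, hw] using h3
      rw [Matrix.sub_mulVec, Matrix.smul_mulVec, Matrix.one_mulVec, sub_eq_zero] at hcol
      exact hcol
    have hpow : ∀ n : ℕ, (M ^ n).mulVec w = l ^ n • w := by
      intro n
      induction n with
      | zero => simp [Matrix.one_mulVec]
      | succ n ih =>
        rw [pow_succ', ← Matrix.mulVec_mulVec, ih, Matrix.mulVec_smul, hev, smul_smul,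
          ← pow_succ]
    have hlk : l ^ k = 1 := by
      have h1 := hpow k
      rw [hMk, Matrix.one_mulVec] at h1
      have h2 := congrFun h1 i
      simp only [Pi.smul_apply, smul_eq_mul] at h2
      have h3 : (l ^ k - 1) * w i = 0 := by linear_combination - h2
      rcases mul_eq_zero.mp h3 with h | h
      · linear_combination h
      · exact absurd h hij
    exact F4 hlk hl1 hlm1
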